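/- Let α > 0 and let (M₋₁, M₀, M₁) be ℝ^d-valued random vectors with ‖M₀‖ = 1 a.s., such that law(M₀, M₁) ∈ M_α and such that for every bounded measurable f : ℝ^d × ℝ^d → ℝ with f(y₀, y₁) = 0 whenever y₀ = 0, one has E[f(M₋₁, M₀)] = E[f(M₀/‖M₁‖, M₁/‖M₁‖) ‖M₁‖^α 1_{{M₁ ≠ 0}}]. Then the law of (M₀, M₋₁) equals the adjoint measure of the law of (M₀, M₁) in M_α. -/

import Mathlib

open MeasureTheory Filter Set
open scoped ENNReal Topology Classical

noncomputable section

/-- `ℝ^d` with the Euclidean norm. -/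
abbrev Ed (d : ℕ) : Type := EuclideanSpace ℝ (Fin d)

/-- The unit sphere `S^{d-1}` of `ℝ^d`. -/
def unitSphere (d : ℕ) : Set (Ed d) := Metric.sphere 0 1

/-- `∫ 1_{m ≠ 0} 1_S(m/‖m‖) ‖m‖^α P(ds, dm)`: the mass that `P` sends to the set of
directions `S ⊆ S^{d-1}`, weighted by `‖m‖^α`. -/
def dirMass (d : ℕ) (α : ℝ) (P : Measure (Ed d × Ed d)) (S : Set (Ed d)) : ℝ≥0∞ :=
  ∫⁻ p, Set.indicator {p : Ed d × Ed d | p.2 ≠ 0 ∧ ‖p.2‖⁻¹ • p.2 ∈ S}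
    (fun p => ENNReal.ofReal (‖p.2‖ ^ α)) p ∂P

/-- Membership in the class `M_α` of admissible distributions: probability measures
on `S^{d-1} × ℝ^d` (encoded as measures on `ℝ^d × ℝ^d` whose first marginal is
concentrated on the unit sphere) such that
`∫ 1_{m ≠ 0} 1_S(m/‖m‖) ‖m‖^α P(ds, dm) ≤ P(S × ℝ^d)` for every Borel `S ⊆ S^{d-1}`. -/
structure MemMalpha (d : ℕ) (α : ℝ) (P : Measure (Ed d × Ed d)) : Prop where
  prob : IsProbabilityMeasure P
  sphere : P {p : Ed d × Ed d | ‖p.1‖ = 1} = 1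
  adm : ∀ S : Set (Ed d), MeasurableSet S → S ⊆ unitSphere d →
    dirMass d α P S ≤ P (S ×ˢ (univ : Set (Ed d)))

/-- `Q` is the adjoint measure `P*` of `P ∈ M_α`: a Borel measure on
`S^{d-1} × ℝ^d` satisfying
`P*(S × {0}) = P(S × ℝ^d) − ∫ 1_{m ≠ 0} 1_S(m/‖m‖) ‖m‖^α P(ds, dm)` for Borel
`S ⊆ S^{d-1}`, and
`P*(E) = ∫ 1_{m ≠ 0} 1_E(m/‖m‖, s/‖m‖) ‖m‖^α P(ds, dm)` for Borel
`E ⊆ S^{d-1} × (ℝ^d \ {0})`. -/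
structure IsAdjoint (d : ℕ) (α : ℝ) (P Q : Measure (Ed d × Ed d)) : Prop where
  supp : Q {p : Ed d × Ed d | ‖p.1‖ ≠ 1} = 0
  eq_zero : ∀ S : Set (Ed d), MeasurableSet S → S ⊆ unitSphere d →
    Q (S ×ˢ ({0} : Set (Ed d))) = P (S ×ˢ (univ : Set (Ed d))) - dirMass d α P S
  eq_pos : ∀ E : Set (Ed d × Ed d), MeasurableSet E →
    E ⊆ (unitSphere d) ×ˢ ({0}ᶜ : Set (Ed d)) →
    Q E = ∫⁻ p, Set.indicator
        {p : Ed d × Ed d | p.2 ≠ 0 ∧ (‖p.2‖⁻¹ • p.2, ‖p.2‖⁻¹ • p.1) ∈ E}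
        (fun p => ENNReal.ofReal (‖p.2‖ ^ α)) p ∂P

/-- Lemma 4.3 (second part): if `(M₋₁, M₀, M₁)` satisfies the one-step time-change
identity `E[f(M₋₁, M₀)] = E[f(M₀/‖M₁‖, M₁/‖M₁‖) ‖M₁‖^α 1_{M₁ ≠ 0}]` for all bounded
measurable `f` vanishing in the first coordinate at `0`, and `law (M₀, M₁) ∈ M_α`,
then `law (M₀, M₋₁)` is the adjoint of `law (M₀, M₁)` in `M_α`. -/
theorem backward_law_is_adjoint
    {d : ℕ} {α : ℝ} (hα : 0 < α)
    {Ω : Type*} [MeasurableSpace Ω] (ν : Measure Ω) [IsProbabilityMeasure ν]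
    (Mm1 M0 M1 : Ω → Ed d)
    (hMm1 : Measurable Mm1) (hM0 : Measurable M0) (hM1 : Measurable M1)
    (hnorm : ∀ᵐ ω ∂ν, ‖M0 ω‖ = 1)
    (hadm : MemMalpha d α (ν.map fun ω => (M0 ω, M1 ω)))
    (hTC : ∀ f : Ed d × Ed d → ℝ, Measurable f → (∃ C : ℝ, ∀ y, |f y| ≤ C) →
      (∀ y : Ed d × Ed d, y.1 = 0 → f y = 0) →
      ∫ ω, f (Mm1 ω, M0 ω) ∂ν
        = ∫ ω, (if M1 ω ≠ 0
            then f (‖M1 ω‖⁻¹ • M0 ω, ‖M1 ω‖⁻¹ • M1 ω) * ‖M1 ω‖ ^ α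
            else 0) ∂ν) :
    IsAdjoint d α (ν.map fun ω => (M0 ω, M1 ω)) (ν.map fun ω => (M0 ω, Mm1 ω)) := by
  haveI hPprob : IsProbabilityMeasure (ν.map fun ω => (M0 ω, M1 ω)) := hadm.prob
  set P := ν.map fun ω => (M0 ω, M1 ω) with hPdef
  set Q := ν.map fun ω => (M0 ω, Mm1 ω) with hQdef
  have hmapP : Measurable fun ω => (M0 ω, M1 ω) := hM0.prodMk hM1
  have hmapQ : Measurable fun ω => (M0 ω, Mm1 ω) := hM0.prodMk hMm1
  haveI hQprob : IsProbabilityMeasure Q := Measure.isProbabilityMeasure_map hmapQ.aemeasurable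
  have hφ : Measurable fun p : Ed d × Ed d => (‖p.2‖⁻¹ • p.2, ‖p.2‖⁻¹ • p.1) :=
    (measurable_snd.norm.inv.smul measurable_snd).prodMk
      (measurable_snd.norm.inv.smul measurable_fst)
  have hrpow : Measurable fun t : ℝ => t ^ α :=
    (Real.continuous_rpow_const hα.le).measurable
  have hwm : Measurable fun p : Ed d × Ed d => ENNReal.ofReal (‖p.2‖ ^ α) :=
    (hrpow.comp measurable_snd.norm).ennreal_ofReal
  have msSphere : MeasurableSet (unitSphere d) :=
    Metric.isClosed_sphere.measurableSet
  -- the key identity, for all measurable E ⊆ sphere × {0}ᶜ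
  have key : ∀ E : Set (Ed d × Ed d), MeasurableSet E →
      E ⊆ (unitSphere d) ×ˢ ({0}ᶜ : Set (Ed d)) →
      Q E = ∫⁻ p, Set.indicator
          {p : Ed d × Ed d | p.2 ≠ 0 ∧ (‖p.2‖⁻¹ • p.2, ‖p.2‖⁻¹ • p.1) ∈ E}
          (fun p => ENNReal.ofReal (‖p.2‖ ^ α)) p ∂P := by
    intro E hE hEsub
    set A : Set (Ed d × Ed d) :=
      {p : Ed d × Ed d | p.2 ≠ 0 ∧ (‖p.2‖⁻¹ • p.2, ‖p.2‖⁻¹ • p.1) ∈ E} with hAdef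
    have msA : MeasurableSet A := by
      have : A = (Prod.snd ⁻¹' ({0}ᶜ : Set (Ed d))) ∩
          ((fun p : Ed d × Ed d => (‖p.2‖⁻¹ • p.2, ‖p.2‖⁻¹ • p.1)) ⁻¹' E) := rfl
      rw [this]
      exact ((measurableSet_singleton (0 : Ed d)).compl.preimage measurable_snd).inter
        (hE.preimage hφ)
    set L : ℝ≥0∞ := ∫⁻ p, Set.indicator A (fun p => ENNReal.ofReal (‖p.2‖ ^ α)) p ∂P
      with hLdef
    -- finiteness of L
    have hLle : L ≤ dirMass d α P (unitSphere d) := by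
      apply lintegral_mono
      apply Set.indicator_le_indicator_of_subset
      · rintro p ⟨h2, hmem⟩
        refine ⟨h2, ?_⟩
        have : ‖‖p.2‖⁻¹ • p.2‖ = 1 := by
          rw [norm_smul, norm_inv, norm_norm, inv_mul_cancel₀ (norm_ne_zero_iff.2 h2)]
        simpa [unitSphere] using this
      · exact fun p => zero_le
    have hLfin : L ≠ ⊤ := by
      refine ne_top_of_le_ne_top ?_ (hLle.trans (hadm.adm (unitSphere d) msSphere subset_rfl))
      exact (measure_ne_top P _)
    -- apply the time-change identity to the indicator of the swapped set
    set f : Ed d × Ed d → ℝ :=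
      Set.indicator {y : Ed d × Ed d | (y.2, y.1) ∈ E} (fun _ => (1 : ℝ)) with hfdef
    have hfm : Measurable f := by
      apply Measurable.indicator measurable_const
      exact hE.preimage (measurable_snd.prodMk measurable_fst)
    have hfb : ∃ C : ℝ, ∀ y, |f y| ≤ C := by
      refine ⟨1, fun y => ?_⟩
      by_cases h : (y.2, y.1) ∈ E <;> simp [hfdef, Set.indicator_apply, h]
    have hf0 : ∀ y : Ed d × Ed d, y.1 = 0 → f y = 0 := by
      intro y hy
      have : (y.2, y.1) ∉ E := by
        intro hmem
        have := hEsub hmem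
        simp [hy] at this
      simp [hfdef, Set.indicator_apply, this]
    have hTCf := hTC f hfm hfb hf0
    -- rewrite LHS of hTCf
    have hLHS : ∫ ω, f (Mm1 ω, M0 ω) ∂ν = (Q E).toReal := by
      have heq : (fun ω => f (Mm1 ω, M0 ω)) =
          Set.indicator ((fun ω => (M0 ω, Mm1 ω)) ⁻¹' E) (fun _ => (1 : ℝ)) := by
        funext ω
        by_cases h : (M0 ω, Mm1 ω) ∈ E <;>
          simp [hfdef, Set.indicator_apply, h]
      calc ∫ ω, f (Mm1 ω, M0 ω) ∂ν
          = ∫ ω, Set.indicator ((fun ω => (M0 ω, Mm1 ω)) ⁻¹' E) (fun _ => (1 : ℝ)) ω ∂ν := by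
            rw [heq]
        _ = (ν ((fun ω => (M0 ω, Mm1 ω)) ⁻¹' E)).toReal := by
            rw [integral_indicator_const (1 : ℝ) (hE.preimage hmapQ)]; simp; rfl
        _ = (Q E).toReal := by rw [hQdef, Measure.map_apply hmapQ hE]
    -- rewrite RHS of hTCf
    set B : Set Ω := {ω | M1 ω ≠ 0 ∧ (‖M1 ω‖⁻¹ • M1 ω, ‖M1 ω‖⁻¹ • M0 ω) ∈ E} with hBdef
    have msB : MeasurableSet B := msA.preimage hmapP
    have hgeq : ∀ ω, (if M1 ω ≠ 0
        then f (‖M1 ω‖⁻¹ • M0 ω, ‖M1 ω‖⁻¹ • M1 ω) * ‖M1 ω‖ ^ α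
        else 0) = Set.indicator B (fun ω => ‖M1 ω‖ ^ α) ω := by
      intro ω
      by_cases h1 : M1 ω = 0
      · simp [h1, hBdef, Set.indicator_apply]
      · by_cases h2 : (‖M1 ω‖⁻¹ • M1 ω, ‖M1 ω‖⁻¹ • M0 ω) ∈ E <;>
          simp [h1, h2, hfdef, hBdef, Set.indicator_apply]
    have hRHS : ∫ ω, (if M1 ω ≠ 0
        then f (‖M1 ω‖⁻¹ • M0 ω, ‖M1 ω‖⁻¹ • M1 ω) * ‖M1 ω‖ ^ α
        else 0) ∂ν = L.toReal := by
      rw [funext hgeq]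
      have hnn : 0 ≤ᵐ[ν] fun ω => Set.indicator B (fun ω => ‖M1 ω‖ ^ α) ω := by
        filter_upwards with ω
        exact Set.indicator_nonneg (fun ω _ => Real.rpow_nonneg (norm_nonneg _) α) ω
      have hsm : AEStronglyMeasurable
          (fun ω => Set.indicator B (fun ω => ‖M1 ω‖ ^ α) ω) ν :=
        (((hrpow.comp hM1.norm)).indicator msB).aestronglyMeasurable
      rw [integral_eq_lintegral_of_nonneg_ae hnn hsm]
      congr 1
      rw [hLdef, hPdef, lintegral_map (hwm.indicator msA) hmapP]
      apply lintegral_congr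
      intro ω
      by_cases h : ω ∈ B
      · have hA : (M0 ω, M1 ω) ∈ A := h
        simp [Set.indicator_of_mem h, Set.indicator_of_mem hA]
      · have hA : (M0 ω, M1 ω) ∉ A := h
        simp [Set.indicator_of_notMem h, Set.indicator_of_notMem hA]
    rw [hLHS, hRHS] at hTCf
    exact (ENNReal.toReal_eq_toReal_iff' (measure_ne_top Q E) hLfin).mp hTCf
  constructor
  · -- supp
    have hms : MeasurableSet {p : Ed d × Ed d | ‖p.1‖ = 1} :=
      measurable_fst.norm (measurableSet_singleton 1)
    have hset : {p : Ed d × Ed d | ‖p.1‖ ≠ 1} = {p : Ed d × Ed d | ‖p.1‖ = 1}ᶜ := rfl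
    rw [hset, hQdef, Measure.map_apply hmapQ hms.compl]
    have h0 : ν {ω | ¬ ‖M0 ω‖ = 1} = 0 := ae_iff.mp hnorm
    have : (fun ω => (M0 ω, Mm1 ω)) ⁻¹' {p : Ed d × Ed d | ‖p.1‖ = 1}ᶜ
        = {ω | ¬ ‖M0 ω‖ = 1} := rfl
    rw [this, h0]
  · -- eq_zero
    intro S hS hSsub
    have hQuniv : Q (S ×ˢ (univ : Set (Ed d))) = P (S ×ˢ (univ : Set (Ed d))) := by
      rw [Measure.map_apply hmapQ (hS.prod MeasurableSet.univ),
        Measure.map_apply hmapP (hS.prod MeasurableSet.univ)]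
      have hpre : ((fun ω => (M0 ω, Mm1 ω)) ⁻¹' S ×ˢ (univ : Set (Ed d)))
          = ((fun ω => (M0 ω, M1 ω)) ⁻¹' S ×ˢ (univ : Set (Ed d))) := by
        ext ω
        simp [Set.mem_prod]
      rw [hpre]
    have hdisj : Disjoint (S ×ˢ ({0} : Set (Ed d))) (S ×ˢ ({0}ᶜ : Set (Ed d))) := by
      rw [Set.disjoint_left]
      rintro ⟨a, b⟩ ⟨ha, hb⟩ ⟨ha', hb'⟩
      exact hb' hb
    have hsplit : Q (S ×ˢ (univ : Set (Ed d)))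
        = Q (S ×ˢ ({0} : Set (Ed d))) + Q (S ×ˢ ({0}ᶜ : Set (Ed d))) := by
      rw [← measure_union hdisj (hS.prod (measurableSet_singleton 0).compl)]
      congr 1
      rw [← Set.prod_union, Set.union_compl_self]
    have hpos : Q (S ×ˢ ({0}ᶜ : Set (Ed d))) = dirMass d α P S := by
      rw [key (S ×ˢ ({0}ᶜ : Set (Ed d))) (hS.prod (measurableSet_singleton 0).compl)
        (Set.prod_mono hSsub subset_rfl)]
      unfold dirMass
      apply lintegral_congr_ae
      have hae : ∀ᵐ p ∂P, ‖p.1‖ = 1 := by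
        rw [ae_iff]
        have hms1 : MeasurableSet {p : Ed d × Ed d | ‖p.1‖ = 1} :=
          measurable_fst.norm (measurableSet_singleton 1)
        have hc : {p : Ed d × Ed d | ¬ ‖p.1‖ = 1} = {p : Ed d × Ed d | ‖p.1‖ = 1}ᶜ := rfl
        rw [hc, measure_compl hms1 (measure_ne_top P _), hadm.sphere, measure_univ,
          tsub_self]
      filter_upwards [hae] with p hp
      have hiff : (p.2 ≠ 0 ∧ (‖p.2‖⁻¹ • p.2, ‖p.2‖⁻¹ • p.1) ∈ S ×ˢ ({0}ᶜ : Set (Ed d)))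
          ↔ (p.2 ≠ 0 ∧ ‖p.2‖⁻¹ • p.2 ∈ S) := by
        constructor
        · rintro ⟨h2, hm, _⟩
          exact ⟨h2, hm⟩
        · rintro ⟨h2, hm⟩
          refine ⟨h2, hm, ?_⟩
          have hp1 : p.1 ≠ 0 := fun h => by simp [h] at hp
          exact smul_ne_zero (inv_ne_zero (norm_ne_zero_iff.2 h2)) hp1
      simp only [Set.indicator_apply]
      exact if_congr hiff rfl rfl
    have hfin : dirMass d α P S ≠ ⊤ :=
      ne_top_of_le_ne_top (measure_ne_top P _) (hadm.adm S hS hSsub)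
    refine ENNReal.eq_sub_of_add_eq hfin ?_
    rw [← hpos, ← hQuniv, hsplit]
  · -- eq_pos
    exact key
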